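/- For every real β > 2 and every integer l ≥ 1, ∑_{k=1}^∞ |W_β(β^{-l}) / (W_β'(β^k) · (β^{-l} - β^k))| ≤ β^3 · exp(2/(β-1)) / ((β^2 - 1)(β^2 - β - 1)). -/

import Mathlib

open Finset Filter Topology Real

/-- `Wprod β z = ∏_{j=0}^∞ (1 - z·β^{-j})`, the entire function from the context. -/
noncomputable def Wprod (β : ℝ) (z : ℂ) : ℂ := ∏' j : ℕ, (1 - z / (β : ℂ) ^ j)

lemma prod_one_add_sub_one_norm_le (s : Finset ℕ) (u : ℕ → ℂ) :
    ‖∏ i ∈ s, (1 + u i) - 1‖ ≤ ∏ i ∈ s, (1 + ‖u i‖) - 1 := by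
  induction s using Finset.cons_induction with
  | empty => simp
  | cons a s ha ih =>
    rw [Finset.prod_cons, Finset.prod_cons]
    have hP : (1:ℝ) ≤ ∏ i ∈ s, (1 + ‖u i‖) := by
      calc (1:ℝ) = ∏ _i ∈ s, (1:ℝ) := by simp
        _ ≤ ∏ i ∈ s, (1 + ‖u i‖) :=
          Finset.prod_le_prod (fun i _ => by norm_num) (fun i _ => by linarith [norm_nonneg (u i)])
    have h1 : (1 + u a) * ∏ i ∈ s, (1 + u i) - 1
        = (1 + u a) * (∏ i ∈ s, (1 + u i) - 1) + u a := by ring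
    rw [h1]
    calc ‖(1 + u a) * (∏ i ∈ s, (1 + u i) - 1) + u a‖
        ≤ ‖1 + u a‖ * ‖∏ i ∈ s, (1 + u i) - 1‖ + ‖u a‖ := by
          exact (norm_add_le _ _).trans (by rw [norm_mul])
      _ ≤ (1 + ‖u a‖) * (∏ i ∈ s, (1 + ‖u i‖) - 1) + ‖u a‖ := by
          have h1a : ‖(1:ℂ) + u a‖ ≤ 1 + ‖u a‖ := (norm_add_le _ _).trans (by simp)
          refine add_le_add (mul_le_mul h1a ih (norm_nonneg _) (by linarith [norm_nonneg (u a)])) le_rfl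
      _ = (1 + ‖u a‖) * ∏ i ∈ s, (1 + ‖u i‖) - 1 := by ring

lemma prod_one_add_le_exp (s : Finset ℕ) (v : ℕ → ℝ) (hv : ∀ i, 0 ≤ v i) :
    ∏ i ∈ s, (1 + v i) ≤ Real.exp (∑ i ∈ s, v i) := by
  rw [Real.exp_sum]
  exact Finset.prod_le_prod (fun i _ => by linarith [hv i])
    (fun i _ => by linarith [Real.add_one_le_exp (v i)])

lemma exp_neg_two_mul_le {t : ℝ} (h0 : 0 ≤ t) (h2 : t ≤ 1/2) :
    Real.exp (-(2*t)) ≤ 1 - t := by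
  have h1 := Real.add_one_le_exp (2*t)
  have h4 : (0:ℝ) < Real.exp (2*t) := Real.exp_pos _
  have h3 : Real.exp (-(2*t)) = (Real.exp (2*t))⁻¹ := by rw [← Real.exp_neg]
  rw [h3]
  have h5 : (Real.exp (2*t))⁻¹ * Real.exp (2*t) = 1 := inv_mul_cancel₀ h4.ne'
  nlinarith [inv_pos.mpr h4]

section W

variable {β : ℝ}

lemma hasProd_zero_of_eq_zero {f : ℕ → ℂ} (m : ℕ) (hm : f m = 0) : HasProd f 0 := by
  have h : (fun _ : Finset ℕ => (0:ℂ)) =ᶠ[atTop] fun s => ∏ i ∈ s, f i := by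
    filter_upwards [eventually_ge_atTop ({m} : Finset ℕ)] with s hs
    exact (Finset.prod_eq_zero (Finset.singleton_subset_iff.mp hs) hm).symm
  exact tendsto_const_nhds.congr' h

lemma norm_cpow (hβ : 2 < β) (j : ℕ) : ‖(β:ℂ)^j‖ = β^j := by
  rw [norm_pow, Complex.norm_real, Real.norm_eq_abs, abs_of_pos (by linarith)]

lemma multipliable_fac (hβ : 2 < β) (z : ℂ) :
    Multipliable (fun j : ℕ => 1 - z / (β:ℂ)^j) := by
  have hβ0 : (0:ℝ) < β := by linarith
  have hr1 : (1:ℝ)/β < 1 := by rw [div_lt_one hβ0]; linarith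
  have hr0 : (0:ℝ) ≤ 1/β := by positivity
  by_cases h : ∃ m, 1 - z/(β:ℂ)^m = 0
  · obtain ⟨m, hm⟩ := h; exact ⟨0, hasProd_zero_of_eq_zero m hm⟩
  · push_neg at h
    refine Complex.multipliable_of_summable_log ?_
    apply Summable.of_norm_bounded_eventually_nat (g := fun j => 3/2 * (‖z‖ * (1/β)^j))
    · exact ((summable_geometric_of_lt_one hr0 hr1).mul_left _).mul_left _
    · have hto : Tendsto (fun j : ℕ => ‖z‖ * (1/β)^j) atTop (𝓝 (‖z‖ * 0)) :=
        (tendsto_pow_atTop_nhds_zero_of_lt_one hr0 hr1).const_mul _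
      rw [mul_zero] at hto
      filter_upwards [hto.eventually_le_const (by norm_num : (0:ℝ) < 1/2)] with j hj
      have hnorm : ‖-(z/(β:ℂ)^j)‖ = ‖z‖ * (1/β)^j := by
        rw [norm_neg, norm_div, norm_cpow hβ, div_eq_mul_inv, one_div, inv_pow]
      have h1 : (1 : ℂ) - z/(β:ℂ)^j = 1 + -(z/(β:ℂ)^j) := by ring
      rw [h1]
      calc ‖Complex.log (1 + -(z/(β:ℂ)^j))‖ ≤ 3/2 * ‖-(z/(β:ℂ)^j)‖ :=
            Complex.norm_log_one_add_half_le_self (by rw [hnorm]; exact hj)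
        _ = 3/2 * (‖z‖ * (1/β)^j) := by rw [hnorm]

lemma hasProdW (hβ : 2 < β) (z : ℂ) :
    HasProd (fun j : ℕ => 1 - z / (β:ℂ)^j) (Wprod β z) :=
  (multipliable_fac hβ z).hasProd

lemma tendsto_partial (hβ : 2 < β) (z : ℂ) :
    Tendsto (fun n => ∏ j ∈ Finset.range n, (1 - z / (β:ℂ)^j)) atTop (𝓝 (Wprod β z)) :=
  (hasProdW hβ z).tendsto_prod_nat

lemma sum_geom_ge (hβ : 2 < β) (R : ℝ) (hR : 0 ≤ R) (n : ℕ) (s : Finset ℕ)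
    (hs : ∀ j ∈ s, n ≤ j) :
    ∑ j ∈ s, R * (1/β)^j ≤ R * (1/β)^n * (β/(β-1)) := by
  have hβ0 : (0:ℝ) < β := by linarith
  have hr1 : (1:ℝ)/β < 1 := by rw [div_lt_one hβ0]; linarith
  have hr0 : (0:ℝ) ≤ 1/β := by positivity
  obtain ⟨N, hN⟩ := s.exists_nat_subset_range
  have hsub : s ⊆ Finset.Ico n N := fun j hj =>
    Finset.mem_Ico.2 ⟨hs j hj, Finset.mem_range.1 (hN hj)⟩
  have hgeo : ∑ i ∈ Finset.range (N-n), ((1:ℝ)/β)^i ≤ (1 - 1/β)⁻¹ := by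
    have := Summable.sum_le_tsum (Finset.range (N-n)) (fun i _ => pow_nonneg hr0 i)
      (summable_geometric_of_lt_one hr0 hr1)
    rwa [tsum_geometric_of_lt_one hr0 hr1] at this
  have hinv : (1 - 1/β : ℝ)⁻¹ = β/(β-1) := by
    rw [show (1 - 1/β : ℝ) = (β-1)/β by field_simp, inv_div]
  calc ∑ j ∈ s, R * (1/β)^j ≤ ∑ j ∈ Finset.Ico n N, R * (1/β)^j :=
        Finset.sum_le_sum_of_subset_of_nonneg hsub (fun j _ _ => by positivity)
    _ = ∑ i ∈ Finset.range (N-n), R * (1/β)^(n+i) := Finset.sum_Ico_eq_sum_range _ _ _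
    _ = R * (1/β)^n * ∑ i ∈ Finset.range (N-n), (1/β)^i := by
        rw [Finset.mul_sum]; exact Finset.sum_congr rfl fun i _ => by rw [pow_add]; ring
    _ ≤ R * (1/β)^n * (1 - 1/β)⁻¹ := by
        have : (0:ℝ) ≤ R * (1/β)^n := by positivity
        exact mul_le_mul_of_nonneg_left hgeo this
    _ = R * (1/β)^n * (β/(β-1)) := by rw [hinv]

lemma key_tail (hβ : 2 < β) (R : ℝ) (hR : 0 ≤ R) (n : ℕ) (z : ℂ) (hz : ‖z‖ ≤ R) :
    ‖Wprod β z - ∏ j ∈ Finset.range n, (1 - z/(β:ℂ)^j)‖ ≤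
      Real.exp (R * (1/β)^0 * (β/(β-1))) * (Real.exp (R * (1/β)^n * (β/(β-1))) - 1) := by
  have hβ0 : (0:ℝ) < β := by linarith
  set u : ℕ → ℂ := fun j => -(z/(β:ℂ)^j) with hu
  have hun : ∀ j, ‖u j‖ ≤ R * (1/β)^j := by
    intro j
    rw [hu, norm_neg, norm_div, norm_cpow hβ, div_eq_mul_inv, one_div, inv_pow]
    exact mul_le_mul_of_nonneg_right hz (by positivity)
  have hfu : ∀ j, (1 : ℂ) - z/(β:ℂ)^j = 1 + u j := fun j => by rw [hu]; ring
  set P := ∏ j ∈ Finset.range n, (1 - z/(β:ℂ)^j) with hP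
  have ht : Tendsto (fun s : Finset ℕ => ∏ i ∈ s, (1 - z/(β:ℂ)^i)) atTop
      (𝓝 (Wprod β z)) := hasProdW hβ z
  have hnormt : Tendsto (fun s : Finset ℕ => ‖∏ i ∈ s, (1 - z/(β:ℂ)^i) - P‖) atTop
      (𝓝 ‖Wprod β z - P‖) := (ht.sub_const P).norm
  apply le_of_tendsto hnormt
  filter_upwards [eventually_ge_atTop (Finset.range n)] with s hs
  have hsplit : ∏ i ∈ s, (1 - z/(β:ℂ)^i)
      = P * ∏ i ∈ s \ Finset.range n, (1 - z/(β:ℂ)^i) := by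
    rw [hP, mul_comm, Finset.prod_sdiff hs]
  set Q := ∏ i ∈ s \ Finset.range n, (1 - z/(β:ℂ)^i) with hQ
  have h1 : ∏ i ∈ s, (1 - z/(β:ℂ)^i) - P = P * (Q - 1) := by rw [hsplit]; ring
  rw [h1, norm_mul]
  have hPb : ‖P‖ ≤ Real.exp (R * (1/β)^0 * (β/(β-1))) := by
    rw [hP]
    calc ‖∏ j ∈ Finset.range n, (1 - z/(β:ℂ)^j)‖
        = ∏ j ∈ Finset.range n, ‖(1 : ℂ) - z/(β:ℂ)^j‖ := norm_prod _ _
      _ ≤ ∏ j ∈ Finset.range n, (1 + ‖u j‖) := Finset.prod_le_prod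
          (fun j _ => norm_nonneg _)
          (fun j _ => by rw [hfu j]; exact (norm_add_le _ _).trans (by simp))
      _ ≤ Real.exp (∑ j ∈ Finset.range n, ‖u j‖) :=
          prod_one_add_le_exp _ _ (fun j => norm_nonneg _)
      _ ≤ Real.exp (R * (1/β)^0 * (β/(β-1))) := by
          apply Real.exp_le_exp.2
          calc ∑ j ∈ Finset.range n, ‖u j‖ ≤ ∑ j ∈ Finset.range n, R * (1/β)^j :=
                Finset.sum_le_sum fun j _ => hun j
            _ ≤ R * (1/β)^0 * (β/(β-1)) :=
                sum_geom_ge hβ R hR 0 _ (fun j _ => Nat.zero_le j)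
  have hQb : ‖Q - 1‖ ≤ Real.exp (R * (1/β)^n * (β/(β-1))) - 1 := by
    have hQ' : Q = ∏ i ∈ s \ Finset.range n, (1 + u i) := by
      rw [hQ]; exact Finset.prod_congr rfl fun i _ => hfu i
    rw [hQ']
    calc ‖∏ i ∈ s \ Finset.range n, (1 + u i) - 1‖
        ≤ ∏ i ∈ s \ Finset.range n, (1 + ‖u i‖) - 1 :=
          prod_one_add_sub_one_norm_le _ _
      _ ≤ Real.exp (∑ i ∈ s \ Finset.range n, ‖u i‖) - 1 := by
          linarith [prod_one_add_le_exp (s \ Finset.range n) (fun i => ‖u i‖)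
            (fun i => norm_nonneg _)]
      _ ≤ Real.exp (R * (1/β)^n * (β/(β-1))) - 1 := by
          have hsum : ∑ i ∈ s \ Finset.range n, ‖u i‖ ≤ R * (1/β)^n * (β/(β-1)) := by
            calc ∑ i ∈ s \ Finset.range n, ‖u i‖
                ≤ ∑ i ∈ s \ Finset.range n, R * (1/β)^i :=
                  Finset.sum_le_sum fun i _ => hun i
              _ ≤ R * (1/β)^n * (β/(β-1)) := by
                  apply sum_geom_ge hβ R hR n
                  intro j hj
                  have := (Finset.mem_sdiff.1 hj).2
                  simpa [Finset.mem_range, not_lt] using this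
          linarith [Real.exp_le_exp.2 hsum]
  calc ‖P‖ * ‖Q - 1‖ ≤ Real.exp (R * (1/β)^0 * (β/(β-1))) *
        (Real.exp (R * (1/β)^n * (β/(β-1))) - 1) := by
        apply mul_le_mul hPb hQb (norm_nonneg _) (Real.exp_pos _).le

lemma factor_hasDerivAt (β : ℝ) (j : ℕ) (x : ℂ) :
    HasDerivAt (fun z : ℂ => 1 - z/(β:ℂ)^j) (-(((β:ℂ)^j)⁻¹)) x := by
  simpa [one_div] using ((hasDerivAt_id x).div_const ((β:ℂ)^j)).const_sub 1

lemma partial_hasDerivAt (β : ℝ) (s : Finset ℕ) (x : ℂ) :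
    HasDerivAt (fun z : ℂ => ∏ j ∈ s, (1 - z/(β:ℂ)^j))
      (∑ i ∈ s, (∏ j ∈ s.erase i, (1 - x/(β:ℂ)^j)) * (-(((β:ℂ)^i)⁻¹))) x :=
  by simpa [smul_eq_mul] using HasDerivAt.fun_finsetProd fun i _ => factor_hasDerivAt β i x

lemma partial_differentiable (β : ℝ) (n : ℕ) :
    Differentiable ℂ (fun z : ℂ => ∏ j ∈ Finset.range n, (1 - z/(β:ℂ)^j)) :=
  fun x => (partial_hasDerivAt β (Finset.range n) x).differentiableAt

lemma tendsto_uniformly_on (hβ : 2 < β) (R : ℝ) (hR : 0 < R) :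
    TendstoUniformlyOn (fun n (z : ℂ) => ∏ j ∈ Finset.range n, (1 - z/(β:ℂ)^j))
      (Wprod β) atTop (Metric.closedBall 0 R) := by
  have hβ0 : (0:ℝ) < β := by linarith
  have hr1 : (1:ℝ)/β < 1 := by rw [div_lt_one hβ0]; linarith
  have hr0 : (0:ℝ) ≤ 1/β := by positivity
  rw [Metric.tendstoUniformlyOn_iff]
  intro ε hε
  have ht0 : Tendsto (fun n : ℕ => R * (1/β)^n * (β/(β-1))) atTop (𝓝 0) := by
    have := ((tendsto_pow_atTop_nhds_zero_of_lt_one hr0 hr1).const_mul R).mul_const (β/(β-1))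
    simpa using this
  have hexp : Tendsto (fun n : ℕ => Real.exp (R * (1/β)^n * (β/(β-1)))) atTop (𝓝 1) := by
    simpa [Function.comp_def] using (Real.continuous_exp.tendsto 0).comp ht0
  have hb : Tendsto (fun n : ℕ => Real.exp (R * (1/β)^0 * (β/(β-1))) *
      (Real.exp (R * (1/β)^n * (β/(β-1))) - 1)) atTop (𝓝 0) := by
    have := (hexp.sub_const 1).const_mul (Real.exp (R * (1/β)^0 * (β/(β-1))))
    simpa using this
  filter_upwards [hb.eventually_lt_const hε] with n hn z hz
  rw [dist_eq_norm]
  refine lt_of_le_of_lt (key_tail hβ R hR.le n z ?_) hn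
  simpa [Metric.mem_closedBall, dist_zero_right] using hz

lemma deriv_tendsto (hβ : 2 < β) (m : ℕ) :
    Tendsto (fun n => deriv (fun z : ℂ => ∏ j ∈ Finset.range n, (1 - z/(β:ℂ)^j)) ((β:ℂ)^m))
      atTop (𝓝 (deriv (Wprod β) ((β:ℂ)^m))) := by
  have hβ0 : (0:ℝ) < β := by linarith
  set R : ℝ := β^m + 1 with hRdef
  have hR : 0 < R := by positivity
  have h1 : TendstoLocallyUniformlyOn
      (fun n (z : ℂ) => ∏ j ∈ Finset.range n, (1 - z/(β:ℂ)^j)) (Wprod β) atTop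
      (Metric.ball 0 R) :=
    ((tendsto_uniformly_on hβ R hR).mono Metric.ball_subset_closedBall).tendstoLocallyUniformlyOn
  have h2 := h1.deriv (Filter.Eventually.of_forall fun n =>
    (partial_differentiable β n).differentiableOn) Metric.isOpen_ball
  have hmem : (β:ℂ)^m ∈ Metric.ball (0:ℂ) R := by
    rw [Metric.mem_ball, dist_zero_right, norm_cpow hβ]
    simp [hRdef]
  exact h2.tendsto_at hmem

lemma deriv_partial_eq (hβ : 2 < β) (m n : ℕ) (hmn : m < n) :
    deriv (fun z : ℂ => ∏ j ∈ Finset.range n, (1 - z/(β:ℂ)^j)) ((β:ℂ)^m)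
      = -(((β:ℂ)^m)⁻¹) * ∏ j ∈ (Finset.range n).erase m, (1 - (β:ℂ)^m/(β:ℂ)^j) := by
  have hc0 : (β:ℂ) ≠ 0 := Complex.ofReal_ne_zero.2 (by linarith)
  have hcm : ((β:ℂ)^m) ≠ 0 := pow_ne_zero _ hc0
  have hfun : (fun z : ℂ => ∏ j ∈ Finset.range n, (1 - z/(β:ℂ)^j))
      = fun z => (1 - z/(β:ℂ)^m) * ∏ j ∈ (Finset.range n).erase m, (1 - z/(β:ℂ)^j) := by
    funext z; rw [Finset.mul_prod_erase (Finset.range n) (fun j => 1 - z/(β:ℂ)^j) (Finset.mem_range.2 hmn)]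
  rw [hfun]
  have hf := factor_hasDerivAt β m ((β:ℂ)^m)
  have hg := partial_hasDerivAt β ((Finset.range n).erase m) ((β:ℂ)^m)
  have hd := (hf.fun_mul hg).deriv
  rw [hd, div_self hcm]
  ring


lemma prod_pow_sub_one_ge (hβ : 2 < β) (m : ℕ) (hm : 1 ≤ m) :
    (β-1) * (β^2-β)^(m-1) ≤ ∏ i ∈ Finset.range m, (β^(i+1) - 1) := by
  have hβ1 : (1:ℝ) ≤ β := by linarith
  induction m, hm using Nat.le_induction with
  | base => simp
  | succ m hm ih =>
    rw [Finset.prod_range_succ]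
    have hq0 : (0:ℝ) ≤ β^2 - β := by nlinarith
    have h1 : (β-1) * (β^2-β)^(m+1-1) = ((β-1)*(β^2-β)^(m-1)) * (β^2-β) := by
      rw [show m+1-1 = (m-1)+1 by omega, pow_succ]; ring
    rw [h1]
    have hfac : β^2 - β ≤ β^(m+1) - 1 := by
      have h2 : β^2 ≤ β^(m+1) := pow_le_pow_right₀ hβ1 (by omega)
      linarith
    have hprodnn : (0:ℝ) ≤ ∏ i ∈ Finset.range m, (β^(i+1) - 1) :=
      Finset.prod_nonneg fun i _ => by linarith [one_le_pow₀ hβ1 (n := i+1)]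
    exact mul_le_mul ih hfac hq0 hprodnn

lemma erase_prod_lower (hβ : 2 < β) (m n : ℕ) (hm : 1 ≤ m) (hmn : m < n) :
    (β-1) * (β^2-β)^(m-1) * Real.exp (-(2/(β-1)))
      ≤ |∏ j ∈ (Finset.range n).erase m, (1 - β^m/β^j)| := by
  have hβ0 : (0:ℝ) < β := by linarith
  have hβ1 : (1:ℝ) ≤ β := by linarith
  have hsplit : (Finset.range n).erase m = Finset.range m ∪ Finset.Ico (m+1) n := by
    ext j
    simp only [Finset.mem_erase, Finset.mem_range, Finset.mem_union, Finset.mem_Ico]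
    omega
  have hdisj : Disjoint (Finset.range m) (Finset.Ico (m+1) n) := by
    rw [Finset.disjoint_left]
    intro j hj hj'
    simp only [Finset.mem_range] at hj
    simp only [Finset.mem_Ico] at hj'
    omega
  rw [hsplit, Finset.prod_union hdisj, abs_mul]
  have hA : ∏ i ∈ Finset.range m, (β^(i+1) - 1)
      ≤ |∏ j ∈ Finset.range m, (1 - β^m/β^j)| := by
    rw [Finset.abs_prod]
    have habs : ∀ j ∈ Finset.range m, |1 - β^m/β^j| = β^m/β^j - 1 := by
      intro j hj
      have hjm : j < m := Finset.mem_range.1 hj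
      have h2 : β^(j+1) ≤ β^m := pow_le_pow_right₀ hβ1 (by omega)
      have h3 : (1:ℝ) ≤ β^m/β^j := by
        rw [le_div_iff₀ (by positivity)]
        calc (1:ℝ) * β^j = β^j := by ring
          _ ≤ β^m := pow_le_pow_right₀ hβ1 (by omega)
      rw [abs_sub_comm, abs_of_nonneg (by linarith)]
    rw [Finset.prod_congr rfl habs]
    have hrefl : ∏ j ∈ Finset.range m, (β^m/β^j - 1)
        = ∏ i ∈ Finset.range m, (β^(i+1) - 1) := by
      rw [← Finset.prod_range_reflect (fun j => β^m/β^j - 1) m]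
      apply Finset.prod_congr rfl
      intro i hi
      have him : i < m := Finset.mem_range.1 hi
      have : β^m / β^(m-1-i) = β^(i+1) := by
        rw [div_eq_iff (by positivity : (β:ℝ)^(m-1-i) ≠ 0), ← pow_add]
        congr 1
        omega
      rw [this]
    rw [hrefl]
  have hB : Real.exp (-(2/(β-1)))
      ≤ |∏ j ∈ Finset.Ico (m+1) n, (1 - β^m/β^j)| := by
    have hfac : ∀ j ∈ Finset.Ico (m+1) n, Real.exp (-(2*(β^m*(1/β)^j))) ≤ 1 - β^m/β^j := by
      intro j hj
      have hjm : m+1 ≤ j := (Finset.mem_Ico.1 hj).1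
      have heq : β^m/β^j = β^m*(1/β)^j := by
        rw [one_div, inv_pow, div_eq_mul_inv]
      have ht0 : (0:ℝ) ≤ β^m*(1/β)^j := by positivity
      have ht2 : β^m*(1/β)^j ≤ 1/2 := by
        have h1 : β^m*(1/β)^j ≤ β^m*(1/β)^(m+1) := by
          apply mul_le_mul_of_nonneg_left _ (by positivity)
          apply pow_le_pow_of_le_one (by positivity) (by rw [div_le_one hβ0]; linarith) hjm
        have h2 : β^m*(1/β)^(m+1) = 1/β := by
          rw [one_div, inv_pow, pow_succ]
          field_simp
        rw [h2] at h1
        calc β^m*(1/β)^j ≤ 1/β := h1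
          _ ≤ 1/2 := by rw [div_le_div_iff₀ hβ0 (by norm_num)]; linarith
      rw [heq]
      exact exp_neg_two_mul_le ht0 ht2
    have hpos : ∀ j ∈ Finset.Ico (m+1) n, (0:ℝ) < 1 - β^m/β^j := by
      intro j hj
      calc (0:ℝ) < Real.exp (-(2*(β^m*(1/β)^j))) := Real.exp_pos _
        _ ≤ 1 - β^m/β^j := hfac j hj
    rw [abs_of_nonneg (Finset.prod_nonneg fun j hj => (hpos j hj).le)]
    calc Real.exp (-(2/(β-1)))
        ≤ Real.exp (∑ j ∈ Finset.Ico (m+1) n, -(2*(β^m*(1/β)^j))) := by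
          apply Real.exp_le_exp.2
          have hsum : ∑ j ∈ Finset.Ico (m+1) n, β^m*(1/β)^j ≤ 1/(β-1) := by
            have := sum_geom_ge hβ (β^m) (by positivity) (m+1) (Finset.Ico (m+1) n)
              (fun j hj => (Finset.mem_Ico.1 hj).1)
            have h2 : β^m * (1/β)^(m+1) * (β/(β-1)) = 1/(β-1) := by
              rw [one_div, inv_pow, pow_succ]
              field_simp
            rwa [h2] at this
          have h3 : ∑ j ∈ Finset.Ico (m+1) n, -(2*(β^m*(1/β)^j))
              = -(2 * ∑ j ∈ Finset.Ico (m+1) n, β^m*(1/β)^j) := by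
            rw [Finset.mul_sum, Finset.sum_neg_distrib]
          rw [h3]
          have h4 : (0:ℝ) < β - 1 := by linarith
          have h5 : 2 * ∑ j ∈ Finset.Ico (m+1) n, β^m*(1/β)^j ≤ 2/(β-1) := by
            rw [show (2:ℝ)/(β-1) = 2 * (1/(β-1)) by ring]
            linarith
          linarith
      _ = ∏ j ∈ Finset.Ico (m+1) n, Real.exp (-(2*(β^m*(1/β)^j))) := Real.exp_sum _ _
      _ ≤ ∏ j ∈ Finset.Ico (m+1) n, (1 - β^m/β^j) :=
          Finset.prod_le_prod (fun j _ => (Real.exp_pos _).le) hfac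
  exact mul_le_mul ((prod_pow_sub_one_ge hβ m hm).trans hA) hB (Real.exp_pos _).le
    (abs_nonneg _)

lemma deriv_lower (hβ : 2 < β) (m : ℕ) (hm : 1 ≤ m) :
    (β-1) * (β^2-β)^(m-1) * Real.exp (-(2/(β-1))) / β^m
      ≤ ‖deriv (Wprod β) ((β:ℂ)^m)‖ := by
  have hβ0 : (0:ℝ) < β := by linarith
  apply ge_of_tendsto (deriv_tendsto hβ m).norm
  filter_upwards [eventually_ge_atTop (m+1)] with n hn
  rw [deriv_partial_eq hβ m n (by omega), norm_mul, norm_neg, norm_inv, norm_cpow hβ]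
  have hcast : ∏ j ∈ (Finset.range n).erase m, (1 - (β:ℂ)^m/(β:ℂ)^j)
      = ((∏ j ∈ (Finset.range n).erase m, (1 - β^m/β^j) : ℝ) : ℂ) := by
    push_cast
    rfl
  rw [hcast, Complex.norm_real, Real.norm_eq_abs, div_eq_mul_inv]
  calc (β-1)*(β^2-β)^(m-1)*Real.exp (-(2/(β-1))) * ((β:ℝ)^m)⁻¹
      ≤ |∏ j ∈ (Finset.range n).erase m, (1 - β^m/β^j)| * ((β:ℝ)^m)⁻¹ :=
        mul_le_mul_of_nonneg_right (erase_prod_lower hβ m n hm (by omega)) (by positivity)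
    _ = ((β:ℝ)^m)⁻¹ * |∏ j ∈ (Finset.range n).erase m, (1 - β^m/β^j)| := mul_comm _ _

lemma W_le_one (hβ : 2 < β) (x : ℝ) (hx0 : 0 ≤ x) (hx1 : x ≤ 1) :
    ‖Wprod β ((x : ℝ) : ℂ)‖ ≤ 1 := by
  apply le_of_tendsto (tendsto_partial hβ ((x:ℝ):ℂ)).norm
  filter_upwards with n
  rw [norm_prod]
  apply Finset.prod_le_one (fun j _ => norm_nonneg _)
  intro j _
  have hpow : (1:ℝ) ≤ β^j := one_le_pow₀ (by linarith)
  have hcast : (1:ℂ) - (x:ℂ)/(β:ℂ)^j = ((1 - x/β^j : ℝ) : ℂ) := by push_cast; ring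
  rw [hcast, Complex.norm_real, Real.norm_eq_abs, abs_of_nonneg]
  · have : 0 ≤ x/β^j := by positivity
    linarith
  · have : x/β^j ≤ 1 := by
      rw [div_le_one (by positivity)]
      linarith
    linarith

end W

set_option maxHeartbeats 1000000 in
/-- for every real β > 2 and every integer l ≥ 1,
∑_{k=1}^∞ |W_β(β^{-l}) / (W_β'(β^k) · (β^{-l} - β^k))|
  ≤ β^3 · exp(2/(β-1)) / ((β² - 1)(β² - β - 1)). -/
theorem statement6 (β : ℝ) (hβ : 2 < β) (l : ℕ) (hl : 1 ≤ l) :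
    Summable (fun k : ℕ =>
      ‖(Wprod β ((((β ^ l)⁻¹ : ℝ)) : ℂ) /
        (deriv (Wprod β) ((β : ℂ) ^ (k + 1)) *
          ((((β ^ l)⁻¹ : ℝ) : ℂ) - (β : ℂ) ^ (k + 1))))‖) ∧
    (∑' k : ℕ,
      ‖(Wprod β ((((β ^ l)⁻¹ : ℝ)) : ℂ) /
        (deriv (Wprod β) ((β : ℂ) ^ (k + 1)) *
          ((((β ^ l)⁻¹ : ℝ) : ℂ) - (β : ℂ) ^ (k + 1))))‖)
      ≤ β ^ 3 * Real.exp (2 / (β - 1)) / ((β ^ 2 - 1) * (β ^ 2 - β - 1)) := by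
  have hβ0 : (0:ℝ) < β := by linarith
  have hβ1 : (1:ℝ) < β := by linarith
  set x : ℝ := (β^l)⁻¹ with hx
  have hx0 : 0 < x := by positivity
  have hx1 : x ≤ 1/β := by
    rw [hx, one_div]
    exact inv_anti₀ hβ0 (by simpa using pow_le_pow_right₀ hβ1.le hl)
  have hx2 : x ≤ 1 := by
    have : (1:ℝ)/β ≤ 1 := by rw [div_le_one hβ0]; linarith
    linarith
  have hq0 : (0:ℝ) < β^2-β := by nlinarith
  have hq0' : (1:ℝ) < β^2-β := by nlinarith
  set q : ℝ := (β^2-β)⁻¹ with hq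
  have hqpos : 0 ≤ q := by positivity
  have hq1 : q < 1 := by rw [hq]; exact inv_lt_one_of_one_lt₀ hq0'
  set C : ℝ := β^3 * Real.exp (2/(β-1)) / ((β^2-1)*(β^2-β)) with hC
  have hterm : ∀ k : ℕ,
      ‖Wprod β ((x:ℝ):ℂ) /
        (deriv (Wprod β) ((β : ℂ) ^ (k + 1)) * (((x:ℝ):ℂ) - (β : ℂ) ^ (k + 1)))‖
      ≤ C * q^k := by
    intro k
    rw [norm_div, norm_mul]
    set Dm := ‖deriv (Wprod β) ((β : ℂ) ^ (k + 1))‖ with hDm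
    set dlow : ℝ := (β-1) * (β^2-β)^k * Real.exp (-(2/(β-1))) / β^(k+1) with hdlow
    have hD : dlow ≤ Dm := by
      have := deriv_lower hβ (k+1) (by omega)
      rw [show (k+1)-1 = k from rfl] at this
      rw [hDm, hdlow]
      exact this
    have hbk : β ≤ β^(k+1) := by
      simpa using pow_le_pow_right₀ hβ1.le (show 1 ≤ k+1 by omega)
    set Xm := ‖((x:ℝ):ℂ) - (β : ℂ) ^ (k + 1)‖ with hXm
    set xlow : ℝ := β^(k+1) * (1 - 1/β^2) with hxlow
    have hX : xlow ≤ Xm := by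
      have hXeq : ((x:ℝ):ℂ) - (β:ℂ)^(k+1) = ((x - β^(k+1) : ℝ):ℂ) := by push_cast; ring
      have hxlt : x < β^(k+1) := lt_of_le_of_lt hx1
        (by rw [div_lt_iff₀ hβ0]; nlinarith [hbk])
      rw [hXm, hXeq, Complex.norm_real, Real.norm_eq_abs, abs_of_neg (by linarith)]
      have h1 : (1:ℝ)/β ≤ β^(k+1)/β^2 := by
        rw [div_le_div_iff₀ hβ0 (by positivity)]
        calc (1:ℝ) * β^2 = β^2 := by ring
          _ ≤ β^(k+2) := pow_le_pow_right₀ hβ1.le (by omega)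
          _ = β^(k+1) * β := by rw [pow_succ]
      rw [hxlow]
      have h2 : β^(k+1) * (1 - 1/β^2) = β^(k+1) - β^(k+1)/β^2 := by ring
      rw [h2]
      have : x ≤ β^(k+1)/β^2 := le_trans hx1 h1
      linarith
    have hdlow0 : 0 < dlow := by
      rw [hdlow]
      have h1 : (0:ℝ) < β - 1 := by linarith
      positivity
    have hxlow0 : 0 < xlow := by
      rw [hxlow]
      have h1 : (0:ℝ) < 1 - 1/β^2 := by
        rw [sub_pos, div_lt_one (by positivity)]
        nlinarith
      positivity
    calc ‖Wprod β ((x:ℝ):ℂ)‖ / (Dm * Xm)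
        ≤ 1 / (dlow * xlow) := by
          apply div_le_div₀ zero_le_one _ (by positivity)
            (mul_le_mul hD hX hxlow0.le (hdlow0.le.trans hD))
          exact W_le_one hβ x hx0.le hx2
      _ = C * q^k := by
          have e1 : dlow * xlow
              = (β-1) * (β^2-β)^k * Real.exp (-(2/(β-1))) * (1 - 1/β^2) := by
            rw [hdlow, hxlow]
            field_simp
          have hb1 : (β:ℝ)^2 - 1 ≠ 0 := by nlinarith
          have hDne : ((β:ℝ)^2-1)*(β^2-β) ≠ 0 := mul_ne_zero hb1 hq0.ne'
          have key : (β-1)*(1-1/β^2)*β^3 = ((β:ℝ)^2-1)*(β^2-β) := by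
            field_simp
          have p1 : ((β:ℝ)^2-β)^k * ((β^2-β)⁻¹)^k = 1 := by
            rw [← mul_pow, mul_inv_cancel₀ hq0.ne', one_pow]
          have p2 : (Real.exp (2/(β-1)))⁻¹ * Real.exp (2/(β-1)) = 1 :=
            inv_mul_cancel₀ (Real.exp_ne_zero _)
          have p3 : (β-1) * (1-1/β^2) * (β^3 / (((β:ℝ)^2-1)*(β^2-β))) = 1 := by
            rw [← mul_div_assoc, key, div_self hDne]
          have hprod : (dlow * xlow) * (C * q^k) = 1 := by
            rw [e1, Real.exp_neg, hC, hq]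
            calc (β-1) * (β^2-β)^k * (Real.exp (2/(β-1)))⁻¹ * (1-1/β^2) *
                  (β^3 * Real.exp (2/(β-1)) / ((β^2-1)*(β^2-β)) * ((β^2-β)⁻¹)^k)
                = ((β-1) * (1-1/β^2) * (β^3 / (((β:ℝ)^2-1)*(β^2-β)))) *
                  (((β:ℝ)^2-β)^k * ((β^2-β)⁻¹)^k) *
                  ((Real.exp (2/(β-1)))⁻¹ * Real.exp (2/(β-1))) := by ring
              _ = 1 := by rw [p1, p2, p3]; ring
          have hne : dlow * xlow ≠ 0 := by positivity
          field_simp at hprod ⊢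
          linarith [hprod]
  have hsummaj : Summable (fun k : ℕ => C * q^k) :=
    (summable_geometric_of_lt_one hqpos hq1).mul_left C
  have habsnn : ∀ k : ℕ, 0 ≤ ‖Wprod β ((x:ℝ):ℂ) /
      (deriv (Wprod β) ((β : ℂ) ^ (k + 1)) * (((x:ℝ):ℂ) - (β : ℂ) ^ (k + 1)))‖ :=
    fun k => norm_nonneg _
  have hsum : Summable (fun k : ℕ =>
      ‖Wprod β ((x:ℝ):ℂ) /
        (deriv (Wprod β) ((β : ℂ) ^ (k + 1)) * (((x:ℝ):ℂ) - (β : ℂ) ^ (k + 1)))‖) :=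
    Summable.of_nonneg_of_le habsnn hterm hsummaj
  refine ⟨hsum, ?_⟩
  calc (∑' k : ℕ, ‖Wprod β ((x:ℝ):ℂ) /
        (deriv (Wprod β) ((β : ℂ) ^ (k + 1)) * (((x:ℝ):ℂ) - (β : ℂ) ^ (k + 1)))‖)
      ≤ ∑' k : ℕ, C * q^k := Summable.tsum_le_tsum hterm hsum hsummaj
    _ = C * (1-q)⁻¹ := by rw [tsum_mul_left, tsum_geometric_of_lt_one hqpos hq1]
    _ = β ^ 3 * Real.exp (2 / (β - 1)) / ((β ^ 2 - 1) * (β ^ 2 - β - 1)) := by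
        rw [hC, hq]
        have h1 : (1:ℝ) - (β^2-β)⁻¹ = (β^2-β-1)/(β^2-β) := by
          rw [eq_div_iff hq0.ne', sub_mul, inv_mul_cancel₀ hq0.ne', one_mul]
        rw [h1, inv_div]
        have hb1 : (β:ℝ)^2 - 1 ≠ 0 := by nlinarith
        have hb2 : (β:ℝ)^2 - β - 1 ≠ 0 := by nlinarith
        rw [div_mul_div_comm, div_eq_div_iff
          (by exact mul_ne_zero (mul_ne_zero hb1 hq0.ne') hb2)
          (mul_ne_zero hb1 hb2)]
        ring
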